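/- Let L : P → C be a reflective localization of a category P onto a full subcategory C, with right adjoint inclusion G and unit η. Suppose L is locally cartesian, i.e., for every morphism f : T → S between objects of C, pullback along f preserves L-local equivalences. Then for every morphism f : T → S in C, the functor f_* : P/T → P/S (right adjoint to pullback) sends L-local objects over T to L-local objects over S. -/

import Mathlib

open CategoryTheory CategoryTheory.Limits

/-- An object `z` of the slice `P/S` is local (with respect to the reflector `L`) if maps
into it invert `L`-local equivalences over `S`. -/
def IsLocalObj {P C : Type*} [Category P] [Category C] (L : P ⥤ C)
    {S : P} (z : Over S) : Prop :=
  ∀ (p p' : Over S) (α : p ⟶ p'), IsIso (L.map α.left) →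
    Function.Bijective (fun g : p' ⟶ z => α ≫ g)

section Aux

variable {P C : Type*} [Category P] [Category C] (L : P ⥤ C) (G : C ⥤ P)
  (adj : L ⊣ G) [G.Full] [G.Faithful]

/-- Precomposition with the unit is bijective on maps into objects of the form `G.obj A`. -/
lemma eta_precomp_bijective (W : P) (A : C) :
    Function.Bijective (fun v : G.obj (L.obj W) ⟶ G.obj A => adj.unit.app W ≫ v) := by
  have key : ∀ v : G.obj (L.obj W) ⟶ G.obj A,
      adj.unit.app W ≫ v = (adj.homEquiv W A) (G.preimage v) := by
    intro v
    rw [Adjunction.homEquiv_unit, G.map_preimage]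
  have heq : (fun v : G.obj (L.obj W) ⟶ G.obj A => adj.unit.app W ≫ v) =
      (adj.homEquiv W A) ∘ (fun v => G.preimage v) := funext fun v => key v
  rw [heq]
  refine (adj.homEquiv W A).bijective.comp ⟨?_, ?_⟩
  · intro u v huv
    have h : G.preimage u = G.preimage v := huv
    rw [← G.map_preimage u, h, G.map_preimage]
  · intro u
    exact ⟨G.map u, G.preimage_map u⟩

/-- `L` inverts the unit. -/
lemma L_map_unit_isIso (W : P) : IsIso (L.map (adj.unit.app W)) := by
  have h : IsIso (L.map (adj.unit.app W) ≫ adj.counit.app (L.obj W)) := by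
    rw [adj.left_triangle_components W]
    exact ⟨⟨𝟙 _, by simp, by simp⟩⟩
  exact IsIso.of_isIso_comp_right (L.map (adj.unit.app W)) (adj.counit.app (L.obj W))

variable [HasPullbacks P]

/-- The unit is invertible on a pullback of objects in the image of `G`. -/
lemma unit_pullback_isIso {A B S' : C} (u : A ⟶ S') (v : B ⟶ S') :
    IsIso (adj.unit.app (pullback (G.map u) (G.map v))) := by
  set R := pullback (G.map u) (G.map v) with hR
  set j₁ : G.obj (L.obj R) ⟶ G.obj A :=
    G.map (L.map (pullback.fst (G.map u) (G.map v)) ≫ adj.counit.app A) with hj₁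
  set j₂ : G.obj (L.obj R) ⟶ G.obj B :=
    G.map (L.map (pullback.snd (G.map u) (G.map v)) ≫ adj.counit.app B) with hj₂
  have hcomm : j₁ ≫ G.map u = j₂ ≫ G.map v := by
    rw [hj₁, hj₂, ← G.map_comp, ← G.map_comp]
    congr 1
    simp only [Category.assoc, ← Adjunction.counit_naturality, ← L.map_comp_assoc,
      pullback.condition]
  set j : G.obj (L.obj R) ⟶ R := pullback.lift j₁ j₂ hcomm with hj
  have h1 : adj.unit.app R ≫ j = 𝟙 R := by
    apply pullback.hom_ext
    · simp [hj, hj₁, pullback.lift_fst]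
    · simp [hj, hj₂, pullback.lift_snd]
  have h2 : j ≫ adj.unit.app R = 𝟙 (G.obj (L.obj R)) := by
    apply (eta_precomp_bijective L G adj R (L.obj R)).1
    show adj.unit.app R ≫ j ≫ adj.unit.app R = adj.unit.app R ≫ 𝟙 _
    rw [← Category.assoc, h1]
    simp
  exact ⟨j, h1, h2⟩

/-- The comparison map from `X ×_{GS} GT` to `G(LX) ×_{GS} GT` is inverted by `L`. -/
lemma sigma_inverted
    (hloc : ∀ {T S : C} (f : T ⟶ S) {X Y : P}
      (p : X ⟶ G.obj S) (p' : Y ⟶ G.obj T) (q : Y ⟶ X),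
      IsPullback q p' p (G.map f) → IsIso (L.map p) → IsIso (L.map p'))
    {T S : C} (f : T ⟶ S) {X : P} (a : X ⟶ G.obj S)
    (ea : a ≫ 𝟙 _ = adj.unit.app X ≫ G.map (L.map a ≫ adj.counit.app S)) :
    IsIso (L.map (pullback.map a (G.map f) (G.map (L.map a ≫ adj.counit.app S)) (G.map f)
      (adj.unit.app X) (𝟙 _) (𝟙 _) ea (by simp))) := by
  set ahat : L.obj X ⟶ S := L.map a ≫ adj.counit.app S with hahat
  set R := pullback (G.map ahat) (G.map f) with hRdef
  set σ := pullback.map a (G.map f) (G.map ahat) (G.map f)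
    (adj.unit.app X) (𝟙 _) (𝟙 _) ea (by simp) with hσ
  have hPa : IsPullback (pullback.snd a (G.map f)) (pullback.fst a (G.map f)) (G.map f) a :=
    (IsPullback.of_hasPullback a (G.map f)).flip
  have hRpb : IsPullback (pullback.snd (G.map ahat) (G.map f)) (pullback.fst (G.map ahat) (G.map f))
      (G.map f) (G.map ahat) := (IsPullback.of_hasPullback (G.map ahat) (G.map f)).flip
  have hbig : IsPullback (σ ≫ pullback.snd (G.map ahat) (G.map f)) (pullback.fst a (G.map f))
      (G.map f) (adj.unit.app X ≫ G.map ahat) := by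
    have e1 : σ ≫ pullback.snd (G.map ahat) (G.map f) = pullback.snd a (G.map f) := by
      rw [hσ]; simp [pullback.lift_snd]
    have e2 : adj.unit.app X ≫ G.map ahat = a := by rw [← ea, Category.comp_id]
    rw [e1, e2]; exact hPa
  have hcomm : σ ≫ pullback.fst (G.map ahat) (G.map f) =
      pullback.fst a (G.map f) ≫ adj.unit.app X := by rw [hσ]; simp [pullback.lift_fst]
  have hleft : IsPullback σ (pullback.fst a (G.map f))
      (pullback.fst (G.map ahat) (G.map f)) (adj.unit.app X) :=
    IsPullback.of_right hbig hcomm hRpb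
  have hunit : IsIso (adj.unit.app R) := unit_pullback_isIso L G adj ahat f
  set pihat : L.obj R ⟶ L.obj X :=
    L.map (pullback.fst (G.map ahat) (G.map f)) ≫ adj.counit.app (L.obj X) with hpihat
  have hfstR : pullback.fst (G.map ahat) (G.map f) ≫ 𝟙 _ = adj.unit.app R ≫ G.map pihat := by
    rw [hpihat]; simp
  have hsq : IsPullback (pullback.fst a (G.map f)) (σ ≫ adj.unit.app R)
      (adj.unit.app X) (G.map pihat) := by
    refine hleft.flip.of_iso (Iso.refl _) (Iso.refl _) (asIso (adj.unit.app R)) (Iso.refl _)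
      ?_ ?_ ?_ ?_
    · simp
    · simp
    · simp
    · exact hfstR
  have hinv : IsIso (L.map (σ ≫ adj.unit.app R)) :=
    hloc pihat (adj.unit.app X) (σ ≫ adj.unit.app R) (pullback.fst a (G.map f)) hsq
      (L_map_unit_isIso L G adj X)
  rw [L.map_comp] at hinv
  have hLu : IsIso (L.map (adj.unit.app R)) := L_map_unit_isIso L G adj R
  exact IsIso.of_isIso_comp_right (L.map σ) (L.map (adj.unit.app R))

end Aux

/-- Let `L : P ⥤ C` be a reflective localization (fully faithful right adjoint inclusion `G`)
which is locally cartesian: for every morphism `f : T ⟶ S` in `C`, pullback along `f`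
preserves `L`-local equivalences.  Then for every `f : T ⟶ S` in `C`, any right adjoint
`f_* : P/T ⥤ P/S` of pullback along `f` sends local objects over `T` to local objects
over `S`. -/
theorem pushforward_preserves_local {P C : Type*} [Category P] [Category C] [HasPullbacks P]
    (L : P ⥤ C) (G : C ⥤ P) (adj : L ⊣ G) [G.Full] [G.Faithful]
    (hloc : ∀ {T S : C} (f : T ⟶ S) {X Y : P}
      (p : X ⟶ G.obj S) (p' : Y ⟶ G.obj T) (q : Y ⟶ X),
      IsPullback q p' p (G.map f) → IsIso (L.map p) → IsIso (L.map p'))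
    {T S : C} (f : T ⟶ S) (fstar : Over (G.obj T) ⥤ Over (G.obj S))
    (fadj : Over.pullback (G.map f) ⊣ fstar)
    (z : Over (G.obj T)) (hz : IsLocalObj L z) :
    IsLocalObj L (fstar.obj z) := by
  intro p p' α hα
  -- the key step : `L` inverts the pulled-back morphism
  have hm : IsIso (L.map (((Over.pullback (G.map f)).map α).left)) := by
    set X := p.left
    set X' := p'.left
    set a : X ⟶ G.obj S := p.hom with ha
    set b : X' ⟶ G.obj S := p'.hom with hb
    set w : X ⟶ X' := α.left with hw
    have hwb : w ≫ b = a := Over.w α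
    set ahat : L.obj X ⟶ S := L.map a ≫ adj.counit.app S with hahat
    set bhat : L.obj X' ⟶ S := L.map b ≫ adj.counit.app S with hbhat
    have hab : ahat = L.map w ≫ bhat := by
      rw [hahat, hbhat, ← hwb, L.map_comp, Category.assoc]
    have ea : a ≫ 𝟙 _ = adj.unit.app X ≫ G.map ahat := by rw [hahat]; simp
    have eb : b ≫ 𝟙 _ = adj.unit.app X' ≫ G.map bhat := by rw [hbhat]; simp
    set σa := pullback.map a (G.map f) (G.map ahat) (G.map f)
      (adj.unit.app X) (𝟙 _) (𝟙 _) ea (by simp) with hσa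
    set σb := pullback.map b (G.map f) (G.map bhat) (G.map f)
      (adj.unit.app X') (𝟙 _) (𝟙 _) eb (by simp) with hσb
    have eρ : G.map ahat ≫ 𝟙 _ = G.map (L.map w) ≫ G.map bhat := by
      rw [Category.comp_id, ← G.map_comp, hab]
    set ρ := pullback.map (G.map ahat) (G.map f) (G.map bhat) (G.map f)
      (G.map (L.map w)) (𝟙 _) (𝟙 _) eρ (by simp) with hρdef
    have hσa' : IsIso (L.map σa) := sigma_inverted L G adj hloc f a ea
    have hσb' : IsIso (L.map σb) := sigma_inverted L G adj hloc f b eb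
    have hρ : IsIso ρ := by
      have : IsIso (L.map w) := hα
      infer_instance
    have hnat : w ≫ adj.unit.app X' = adj.unit.app X ≫ G.map (L.map w) := by simp
    have hcomm : ((Over.pullback (G.map f)).map α).left ≫ σb = σa ≫ ρ := by
      apply pullback.hom_ext
      · simp only [Over.pullback_map_left, hσa, hσb, hρdef, Category.assoc, ha, hb,
          pullback.lift_fst, pullback.lift_fst_assoc]
        refine (pullback.lift_fst_assoc _ _ _ _).trans ?_
        rw [← hw, Category.assoc, hnat]
      · simp only [Over.pullback_map_left, hσa, hσb, hρdef, Category.assoc, ha, hb,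
          pullback.lift_snd, pullback.lift_snd_assoc, Category.comp_id]
        exact pullback.lift_snd _ _ _
    have hLcomm : L.map (((Over.pullback (G.map f)).map α).left) ≫ L.map σb = L.map σa ≫ L.map ρ := by
      rw [← L.map_comp, ← L.map_comp, hcomm]
    have hiso : IsIso (L.map (((Over.pullback (G.map f)).map α).left) ≫ L.map σb) := by
      rw [hLcomm]; infer_instance
    exact IsIso.of_isIso_comp_right (L.map (((Over.pullback (G.map f)).map α).left)) (L.map σb)
  have hb := hz ((Over.pullback (G.map f)).obj p) ((Over.pullback (G.map f)).obj p') ((Over.pullback (G.map f)).map α) hm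
  have key : (fun g : p' ⟶ fstar.obj z => α ≫ g) =
      (fadj.homEquiv p z) ∘ (fun k : (Over.pullback (G.map f)).obj p' ⟶ z => (Over.pullback (G.map f)).map α ≫ k) ∘
        ⇑(fadj.homEquiv p' z).symm := by
    funext g
    show α ≫ g = fadj.homEquiv p z ((Over.pullback (G.map f)).map α ≫ (fadj.homEquiv p' z).symm g)
    rw [Adjunction.homEquiv_naturality_left, Equiv.apply_symm_apply]
  rw [key]
  exact ((fadj.homEquiv p z).bijective.comp hb).comp (fadj.homEquiv p' z).symm.bijective
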